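/- arXiv:2101.05557 — 4 statements merged into one kernel-verified Lean document; each statement's English description precedes it below -/
import Mathlib

section
/- Let K = Q(α) with α^3 - α^2 - 82α + 64 = 0, b = (10α^2 + 90α - 1936)/19773, c = (6α^2 + 50α - 208)/1521, and E_0 : y^2 + (1-c)xy - by = x^3 - bx^2 over K. Then the point P = (0,0) on E_0 satisfies 13·P = O, and P ≠ O; i.e., P is a point of order 13. -/
open Polynomial

open WeierstrassCurve.Affine in
private lemma some_congr' {F : Type*} [Field F] {W : WeierstrassCurve.Affine F}
    {x₁ y₁ x₂ y₂ : F} (hx : x₁ = x₂) (hy : y₁ = y₂) (h : W.Nonsingular x₁ y₁) :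
    ∃ h' : W.Nonsingular x₂ y₂,
      WeierstrassCurve.Affine.Point.some _ _ h = WeierstrassCurve.Affine.Point.some _ _ h' := by
  subst hx; subst hy; exact ⟨h, rfl⟩

private lemma aux' [Fact (Irreducible (X ^ 3 - X ^ 2 - 82 * X + 64 : ℚ[X]))]
    (p q r : ℚ) (h : ¬(p = 0 ∧ q = 0 ∧ r = 0))
    (hz : (p : AdjoinRoot (X ^ 3 - X ^ 2 - 82 * X + 64 : ℚ[X])) *
        (AdjoinRoot.root (X ^ 3 - X ^ 2 - 82 * X + 64 : ℚ[X])) ^ 2 +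
      (q : AdjoinRoot (X ^ 3 - X ^ 2 - 82 * X + 64 : ℚ[X])) *
        (AdjoinRoot.root (X ^ 3 - X ^ 2 - 82 * X + 64 : ℚ[X])) +
      (r : AdjoinRoot (X ^ 3 - X ^ 2 - 82 * X + 64 : ℚ[X])) = 0) : False := by
  set f : ℚ[X] := X ^ 3 - X ^ 2 - 82 * X + 64 with hf
  have hfdeg : f.degree = 3 := by
    rw [hf]; compute_degree!
  have hfne : f ≠ 0 := fun h0 => by simp [h0] at hfdeg
  have hmono : f.Monic := by
    rw [hf]; monicity!
  set p' : ℚ[X] := C p * X ^ 2 + C q * X + C r with hp'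
  have hp'ne : p' ≠ (0 : ℚ[X]) := by
    intro h0
    apply h
    refine ⟨?_, ?_, ?_⟩
    · have := congrArg (fun g => Polynomial.coeff g 2) h0
      simpa [hp', coeff_C] using this
    · have := congrArg (fun g => Polynomial.coeff g 1) h0
      simpa [hp', coeff_C] using this
    · have := congrArg (fun g => Polynomial.coeff g 0) h0
      simpa [hp', coeff_C] using this
  have haev : Polynomial.aeval (AdjoinRoot.root f) p' = 0 := by
    rw [hp']
    simp only [map_add, map_mul, map_pow, aeval_C, aeval_X]
    rw [eq_ratCast (algebraMap ℚ (AdjoinRoot f)) p, eq_ratCast (algebraMap ℚ (AdjoinRoot f)) q,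
      eq_ratCast (algebraMap ℚ (AdjoinRoot f)) r]
    exact hz
  have hdvd : minpoly ℚ (AdjoinRoot.root f) ∣ p' := minpoly.dvd ℚ _ haev
  rw [show minpoly ℚ (AdjoinRoot.root f) = f * C f.leadingCoeff⁻¹ from AdjoinRoot.minpoly_root hfne, hmono.leadingCoeff, inv_one, map_one, mul_one] at hdvd
  have hle := Polynomial.degree_le_of_dvd hdvd hp'ne
  rw [hfdeg] at hle
  have hq : p'.degree ≤ 2 := by
    rw [hp']; exact Polynomial.degree_quadratic_le
  exact absurd (hle.trans hq) (by norm_num)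

/-- On the elliptic curve `E₀ : y² + (1-c)xy - by = x³ - bx²` over `K = ℚ(α)`, where
`α³ - α² - 82α + 64 = 0`, `b = (10α² + 90α - 1936)/19773` and `c = (6α² + 50α - 208)/1521`,
the point `P = (0,0)` satisfies `13·P = O` and `P ≠ O`, i.e. `P` has order `13`. -/
theorem stmt3 [Fact (Irreducible (X ^ 3 - X ^ 2 - 82 * X + 64 : ℚ[X]))] :
    let K := AdjoinRoot (X ^ 3 - X ^ 2 - 82 * X + 64 : ℚ[X])
    let α : K := AdjoinRoot.root _
    let b : K := (10 * α ^ 2 + 90 * α - 1936) / 19773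
    let c : K := (6 * α ^ 2 + 50 * α - 208) / 1521
    let W : WeierstrassCurve.Affine K := ⟨1 - c, -b, -b, 0, 0⟩
    ∃ h : W.Nonsingular 0 0,
      13 • (WeierstrassCurve.Affine.Point.some _ _ h) = 0 ∧
      WeierstrassCurve.Affine.Point.some _ _ h ≠ 0 := by
  intro K α b c W
  have hαroot : α = AdjoinRoot.root (X ^ 3 - X ^ 2 - 82 * X + 64 : ℚ[X]) := rfl
  have aux : ∀ p q r : ℚ, ¬(p = 0 ∧ q = 0 ∧ r = 0) →
      (p : K) * (AdjoinRoot.root (X ^ 3 - X ^ 2 - 82 * X + 64 : ℚ[X])) ^ 2 +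
        (q : K) * (AdjoinRoot.root (X ^ 3 - X ^ 2 - 82 * X + 64 : ℚ[X])) +
        (r : K) = 0 → False := fun p q r h hz => aux' p q r h hz
  have h0 : α ^ 3 - α ^ 2 - 82 * α + 64 = 0 := by
    rw [hαroot]
    have h := AdjoinRoot.mk_self (f := (X ^ 3 - X ^ 2 - 82 * X + 64 : ℚ[X]))
    simpa only [map_ofNat, map_add, map_sub, map_mul, map_pow, AdjoinRoot.mk_X] using h
  have hA1 : W.a₁ = 1 - (6 * α ^ 2 + 50 * α - 208) / 1521 := rfl
  have hA2 : W.a₂ = -((10 * α ^ 2 + 90 * α - 1936) / 19773) := rfl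
  have hA3 : W.a₃ = -((10 * α ^ 2 + 90 * α - 1936) / 19773) := rfl
  have hA4 : W.a₄ = 0 := rfl
  have hA6 : W.a₆ = 0 := rfl
  have hy0 : (0 : K) ≠ W.negY 0 0 := by
    simp only [WeierstrassCurve.Affine.negY, hA1, hA3]
    intro hz
    refine aux (-10) (-90) (1936) (by norm_num) ?_
    rw [← hαroot]
    push_cast
    linear_combination (19773 : K) * hz
  have hP : W.Nonsingular 0 0 := by
    rw [WeierstrassCurve.Affine.nonsingular_iff, WeierstrassCurve.Affine.equation_iff]
    constructor
    · rw [hA1, hA2, hA3, hA4, hA6]; ring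
    · right
      have h' := hy0
      simp only [WeierstrassCurve.Affine.negY] at h'
      exact h'
  have hL2 : W.slope 0 0 0 0 = (0 : K) := by
    rw [WeierstrassCurve.Affine.slope_of_Y_ne rfl hy0, div_eq_iff (sub_ne_zero.mpr hy0)]
    rw [hA4, hA1, hA2]; ring
  have hx2 : W.addX ((0 : K)) ((0 : K)) ((0 : K)) = ((10 * α ^ 2 + 90 * α - 1936) / 19773) := by
    simp only [WeierstrassCurve.Affine.addX, hA1, hA2]
    ring1
  have hy20 : W.addY ((0 : K)) ((0 : K)) ((0 : K)) ((0 : K)) = ((-3176 * α ^ 2 - 29160 * α + 332288) / 30074733) := by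
    simp only [WeierstrassCurve.Affine.addY, WeierstrassCurve.Affine.negAddY, WeierstrassCurve.Affine.addX, WeierstrassCurve.Affine.negY, hA1, hA2, hA3]
    linear_combination ((1100 / 30074733 : K) + (20 / 10024911 : K) * α) * h0
  have hx2' : W.addX ((0 : K)) ((0 : K)) (W.slope ((0 : K)) ((0 : K)) ((0 : K)) ((0 : K))) = ((10 * α ^ 2 + 90 * α - 1936) / 19773) := by
    rw [hL2]; exact hx2
  have hy2' : W.addY ((0 : K)) ((0 : K)) ((0 : K)) (W.slope ((0 : K)) ((0 : K)) ((0 : K)) ((0 : K))) = ((-3176 * α ^ 2 - 29160 * α + 332288) / 30074733) := by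
    rw [hL2]; exact hy20
  obtain ⟨h2, he2⟩ := some_congr' hx2' hy2' (WeierstrassCurve.Affine.nonsingular_add hP hP (fun h => hy0 h.2))
  have e2 : WeierstrassCurve.Affine.Point.some _ _ hP + WeierstrassCurve.Affine.Point.some _ _ hP = WeierstrassCurve.Affine.Point.some _ _ h2 :=
    (WeierstrassCurve.Affine.Point.add_self_of_Y_ne hy0).trans he2
  have hne3 : ((10 * α ^ 2 + 90 * α - 1936) / 19773) ≠ ((0 : K)) := by
    intro hz
    refine aux (10) (90) (-1936) (by norm_num) ?_
    rw [← hαroot]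
    push_cast
    linear_combination (19773 : K) * hz
  have hL3 : W.slope ((10 * α ^ 2 + 90 * α - 1936) / 19773) ((0 : K)) ((-3176 * α ^ 2 - 29160 * α + 332288) / 30074733) ((0 : K)) = ((6 * α ^ 2 + 50 * α - 208) / 1521) := by
    rw [WeierstrassCurve.Affine.slope_of_X_ne hne3, div_eq_iff (sub_ne_zero.mpr hne3)]
    linear_combination ((-1100 / 30074733 : K) + (-20 / 10024911 : K) * α) * h0
  have hx3 : W.addX ((10 * α ^ 2 + 90 * α - 1936) / 19773) ((0 : K)) ((6 * α ^ 2 + 50 * α - 208) / 1521) = ((6 * α ^ 2 + 50 * α - 208) / 1521) := by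
    simp only [WeierstrassCurve.Affine.addX, hA1, hA2]
    ring1
  have hy30 : W.addY ((10 * α ^ 2 + 90 * α - 1936) / 19773) ((0 : K)) ((-3176 * α ^ 2 - 29160 * α + 332288) / 30074733) ((6 * α ^ 2 + 50 * α - 208) / 1521) = ((-68 * α ^ 2 - 560 * α + 768) / 19773) := by
    simp only [WeierstrassCurve.Affine.addY, WeierstrassCurve.Affine.negAddY, WeierstrassCurve.Affine.addX, WeierstrassCurve.Affine.negY, hA1, hA2, hA3]
    linear_combination ((1100 / 30074733 : K) + (20 / 10024911 : K) * α) * h0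
  have hx3' : W.addX ((10 * α ^ 2 + 90 * α - 1936) / 19773) ((0 : K)) (W.slope ((10 * α ^ 2 + 90 * α - 1936) / 19773) ((0 : K)) ((-3176 * α ^ 2 - 29160 * α + 332288) / 30074733) ((0 : K))) = ((6 * α ^ 2 + 50 * α - 208) / 1521) := by
    rw [hL3]; exact hx3
  have hy3' : W.addY ((10 * α ^ 2 + 90 * α - 1936) / 19773) ((0 : K)) ((-3176 * α ^ 2 - 29160 * α + 332288) / 30074733) (W.slope ((10 * α ^ 2 + 90 * α - 1936) / 19773) ((0 : K)) ((-3176 * α ^ 2 - 29160 * α + 332288) / 30074733) ((0 : K))) = ((-68 * α ^ 2 - 560 * α + 768) / 19773) := by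
    rw [hL3]; exact hy30
  obtain ⟨h3, he3⟩ := some_congr' hx3' hy3' (WeierstrassCurve.Affine.nonsingular_add h2 hP (fun h => (hne3 h.1).elim))
  have e3 : WeierstrassCurve.Affine.Point.some _ _ h2 + WeierstrassCurve.Affine.Point.some _ _ hP = WeierstrassCurve.Affine.Point.some _ _ h3 :=
    (WeierstrassCurve.Affine.Point.add_of_X_ne hne3).trans he3
  have hyne6 : ((-68 * α ^ 2 - 560 * α + 768) / 19773) ≠ W.negY ((6 * α ^ 2 + 50 * α - 208) / 1521) ((-68 * α ^ 2 - 560 * α + 768) / 19773) := by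
    simp only [WeierstrassCurve.Affine.negY, hA1, hA3]
    intro hz
    refine aux (-11548) (-94568) (87296) (by norm_num) ?_
    rw [← hαroot]
    push_cast
    linear_combination (2313441 : K) * hz + ((636 : K) + (36 : K) * α) * h0
  have hL6 : W.slope ((6 * α ^ 2 + 50 * α - 208) / 1521) ((6 * α ^ 2 + 50 * α - 208) / 1521) ((-68 * α ^ 2 - 560 * α + 768) / 19773) ((-68 * α ^ 2 - 560 * α + 768) / 19773) = ((-α ^ 2 - 8 * α - 68) / 169) := by
    rw [WeierstrassCurve.Affine.slope_of_Y_ne rfl hyne6, div_eq_iff (sub_ne_zero.mpr hyne6)]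
    simp only [WeierstrassCurve.Affine.negY, hA1, hA2, hA3, hA4]
    linear_combination ((-3160 / 30074733 : K) + (-592 / 30074733 : K) * α + (-308 / 130323843 : K) * α ^ 2 + (-4 / 43441281 : K) * α ^ 3) * h0
  have hx6 : W.addX ((6 * α ^ 2 + 50 * α - 208) / 1521) ((6 * α ^ 2 + 50 * α - 208) / 1521) ((-α ^ 2 - 8 * α - 68) / 169) = ((4 * α ^ 2 + 32 * α - 404) / 2197) := by
    simp only [WeierstrassCurve.Affine.addX, hA1, hA2]
    linear_combination ((257 / 257049 : K) + (5 / 85683 : K) * α) * h0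
  have hy60 : W.addY ((6 * α ^ 2 + 50 * α - 208) / 1521) ((6 * α ^ 2 + 50 * α - 208) / 1521) ((-68 * α ^ 2 - 560 * α + 768) / 19773) ((-α ^ 2 - 8 * α - 68) / 169) = ((-26 * α ^ 2 - 198 * α + 1700) / 28561) := by
    simp only [WeierstrassCurve.Affine.addY, WeierstrassCurve.Affine.negAddY, WeierstrassCurve.Affine.addX, WeierstrassCurve.Affine.negY, hA1, hA2, hA3]
    linear_combination ((-324977 / 390971529 : K) + (961 / 30074733 : K) * α + (1895 / 130323843 : K) * α ^ 2 + (25 / 43441281 : K) * α ^ 3) * h0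
  have hx6' : W.addX ((6 * α ^ 2 + 50 * α - 208) / 1521) ((6 * α ^ 2 + 50 * α - 208) / 1521) (W.slope ((6 * α ^ 2 + 50 * α - 208) / 1521) ((6 * α ^ 2 + 50 * α - 208) / 1521) ((-68 * α ^ 2 - 560 * α + 768) / 19773) ((-68 * α ^ 2 - 560 * α + 768) / 19773)) = ((4 * α ^ 2 + 32 * α - 404) / 2197) := by
    rw [hL6]; exact hx6
  have hy6' : W.addY ((6 * α ^ 2 + 50 * α - 208) / 1521) ((6 * α ^ 2 + 50 * α - 208) / 1521) ((-68 * α ^ 2 - 560 * α + 768) / 19773) (W.slope ((6 * α ^ 2 + 50 * α - 208) / 1521) ((6 * α ^ 2 + 50 * α - 208) / 1521) ((-68 * α ^ 2 - 560 * α + 768) / 19773) ((-68 * α ^ 2 - 560 * α + 768) / 19773)) = ((-26 * α ^ 2 - 198 * α + 1700) / 28561) := by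
    rw [hL6]; exact hy60
  obtain ⟨h6, he6⟩ := some_congr' hx6' hy6' (WeierstrassCurve.Affine.nonsingular_add h3 h3 (fun h => hyne6 h.2))
  have e6 : WeierstrassCurve.Affine.Point.some _ _ h3 + WeierstrassCurve.Affine.Point.some _ _ h3 = WeierstrassCurve.Affine.Point.some _ _ h6 :=
    (WeierstrassCurve.Affine.Point.add_self_of_Y_ne hyne6).trans he6
  have hne7 : ((4 * α ^ 2 + 32 * α - 404) / 2197) ≠ ((0 : K)) := by
    intro hz
    refine aux (4) (32) (-404) (by norm_num) ?_
    rw [← hαroot]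
    push_cast
    linear_combination (2197 : K) * hz
  have hL7 : W.slope ((4 * α ^ 2 + 32 * α - 404) / 2197) ((0 : K)) ((-26 * α ^ 2 - 198 * α + 1700) / 28561) ((0 : K)) = ((-α ^ 2 - 9 * α - 98) / 338) := by
    rw [WeierstrassCurve.Affine.slope_of_X_ne hne7, div_eq_iff (sub_ne_zero.mpr hne7)]
    linear_combination ((36 / 371293 : K) + (2 / 371293 : K) * α) * h0
  have hx7 : W.addX ((4 * α ^ 2 + 32 * α - 404) / 2197) ((0 : K)) ((-α ^ 2 - 9 * α - 98) / 338) = ((4 * α ^ 2 + 32 * α - 404) / 2197) := by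
    simp only [WeierstrassCurve.Affine.addX, hA1, hA2]
    linear_combination ((391 / 1028196 : K) + (7 / 342732 : K) * α) * h0
  have hy70 : W.addY ((4 * α ^ 2 + 32 * α - 404) / 2197) ((0 : K)) ((-26 * α ^ 2 - 198 * α + 1700) / 28561) ((-α ^ 2 - 9 * α - 98) / 338) = ((-48 * α ^ 2 - 352 * α + 11216) / 257049) := by
    simp only [WeierstrassCurve.Affine.addY, WeierstrassCurve.Affine.negAddY, WeierstrassCurve.Affine.addX, WeierstrassCurve.Affine.negY, hA1, hA2, hA3]
    linear_combination ((-77230 / 390971529 : K) + (39139 / 3127772232 : K) * α + (77 / 20049822 : K) * α ^ 2 + (49 / 347530248 : K) * α ^ 3) * h0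
  have hx7' : W.addX ((4 * α ^ 2 + 32 * α - 404) / 2197) ((0 : K)) (W.slope ((4 * α ^ 2 + 32 * α - 404) / 2197) ((0 : K)) ((-26 * α ^ 2 - 198 * α + 1700) / 28561) ((0 : K))) = ((4 * α ^ 2 + 32 * α - 404) / 2197) := by
    rw [hL7]; exact hx7
  have hy7' : W.addY ((4 * α ^ 2 + 32 * α - 404) / 2197) ((0 : K)) ((-26 * α ^ 2 - 198 * α + 1700) / 28561) (W.slope ((4 * α ^ 2 + 32 * α - 404) / 2197) ((0 : K)) ((-26 * α ^ 2 - 198 * α + 1700) / 28561) ((0 : K))) = ((-48 * α ^ 2 - 352 * α + 11216) / 257049) := by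
    rw [hL7]; exact hy70
  obtain ⟨h7, he7⟩ := some_congr' hx7' hy7' (WeierstrassCurve.Affine.nonsingular_add h6 hP (fun h => (hne7 h.1).elim))
  have e7 : WeierstrassCurve.Affine.Point.some _ _ h6 + WeierstrassCurve.Affine.Point.some _ _ hP = WeierstrassCurve.Affine.Point.some _ _ h7 :=
    (WeierstrassCurve.Affine.Point.add_of_X_ne hne7).trans he7
  have hyeq : ((-26 * α ^ 2 - 198 * α + 1700) / 28561) = W.negY ((4 * α ^ 2 + 32 * α - 404) / 2197) ((-48 * α ^ 2 - 352 * α + 11216) / 257049) := by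
    simp only [WeierstrassCurve.Affine.negY, hA1, hA3]
    linear_combination ((-32 / 257049 : K) + (-8 / 1113879 : K) * α) * h0
  have efin : WeierstrassCurve.Affine.Point.some _ _ h6 + WeierstrassCurve.Affine.Point.some _ _ h7 = 0 :=
    WeierstrassCurve.Affine.Point.add_of_Y_eq rfl hyeq
  refine ⟨hP, ?_, WeierstrassCurve.Affine.Point.some_ne_zero hP⟩
  set Pt := WeierstrassCurve.Affine.Point.some _ _ hP with hPt
  have s2 : 2 • Pt = WeierstrassCurve.Affine.Point.some _ _ h2 := by
    rw [two_nsmul]; exact e2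
  have s3 : 3 • Pt = WeierstrassCurve.Affine.Point.some _ _ h3 := by
    have : (3 : ℕ) • Pt = 2 • Pt + 1 • Pt := by rw [← add_nsmul]
    rw [this, s2, one_nsmul]; exact e3
  have s6 : 6 • Pt = WeierstrassCurve.Affine.Point.some _ _ h6 := by
    have : (6 : ℕ) • Pt = 3 • Pt + 3 • Pt := by rw [← add_nsmul]
    rw [this, s3]; exact e6
  have s7 : 7 • Pt = WeierstrassCurve.Affine.Point.some _ _ h7 := by
    have : (7 : ℕ) • Pt = 6 • Pt + 1 • Pt := by rw [← add_nsmul]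
    rw [this, s6, one_nsmul]; exact e7
  have s13 : (13 : ℕ) • Pt = 6 • Pt + 7 • Pt := by rw [← add_nsmul]
  rw [s13, s6, s7]
  exact efin
end

section
/- For every nonzero rational number t, the polynomial w^3 + (-t^3 + t^2 - 3t + 1)w^2 + (-t^3 + 2t^2 - 2t)w + t^2 has square discriminant in Q. -/
/-- For every nonzero rational `t`, the cubic
`w³ + (-t³ + t² - 3t + 1)w² + (-t³ + 2t² - 2t)w + t²` has square discriminant in `ℚ`. -/
theorem stmt5 (t : ℚ) (ht : t ≠ 0) :
    IsSquare
      (⟨1, -t ^ 3 + t ^ 2 - 3 * t + 1, -t ^ 3 + 2 * t ^ 2 - 2 * t, t ^ 2⟩ : Cubic ℚ).discr := by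
  exact ⟨t ^ 2 * (t ^ 4 - t ^ 3 + 5 * t ^ 2 + t + 1), by unfold Cubic.discr; ring⟩
end

section
/- The substitution y = xt - 1 into y^2 + (x^3+x^2+1)y - x^2 - x yields a cubic in x whose discriminant (with respect to x) equals t(t+1)^3(-4t^5 + 5t^4 - t^3 - 25t^2 - 23t - 4), up to multiplication by a nonzero square in Q(t). -/
/-- Substituting `y = xt - 1` into `y² + (x³ + x² + 1)y - x² - x` yields (after removing the
factor `x`) a cubic in `x` whose discriminant equals
`t(t+1)³(-4t⁵ + 5t⁴ - t³ - 25t² - 23t - 4)` up to multiplication by a nonzero square in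
`ℚ(t)`. -/
theorem stmt12 :
    let t : RatFunc ℚ := RatFunc.X
    (∀ x : RatFunc ℚ,
      (x * t - 1) ^ 2 + (x ^ 3 + x ^ 2 + 1) * (x * t - 1) - x ^ 2 - x
        = x * (t * x ^ 3 + (t - 1) * x ^ 2 + (t ^ 2 - 2) * x - (t + 1))) ∧
    ∃ s : RatFunc ℚ, s ≠ 0 ∧
      (⟨t, t - 1, t ^ 2 - 2, -(t + 1)⟩ : Cubic (RatFunc ℚ)).discr
        = s ^ 2 * (t * (t + 1) ^ 3 * (-4 * t ^ 5 + 5 * t ^ 4 - t ^ 3 - 25 * t ^ 2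
            - 23 * t - 4)) := by
  intro t
  have ht : t + 1 ≠ 0 := by
    have h : (Polynomial.X + 1 : Polynomial ℚ) ≠ 0 := by
      intro h
      have := congrArg (fun p => Polynomial.eval 0 p) h
      simp at this
    have := RatFunc.algebraMap_ne_zero h
    simpa [RatFunc.algebraMap_X] using this
  refine ⟨fun x => by ring, (t + 1)⁻¹, inv_ne_zero ht, ?_⟩
  rw [Cubic.discr]
  field_simp
  ring
end

section
/- Let K = Q(α) with α^3 - α^2 - 82α + 64 = 0, and E_0 : y^2 + (1-c)xy - by = x^3 - bx^2 with b = (10α^2 + 90α - 1936)/19773, c = (6α^2 + 50α - 208)/1521. Then the point P = (0,0) lies on E_0 and 6·P ≠ O, 4·P ≠ O (so the order of P does not divide 12). -/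
open Polynomial WeierstrassCurve.Affine WeierstrassCurve.Affine.Point


lemma some_eq_some' {F : Type*} [Field F] {W : WeierstrassCurve.Affine F}
    {x₁ y₁ x₂ y₂ : F} (h₁ : W.Nonsingular x₁ y₁) (h₂ : W.Nonsingular x₂ y₂)
    (hx : x₁ = x₂) (hy : y₁ = y₂) :
    WeierstrassCurve.Affine.Point.some _ _ h₁ = WeierstrassCurve.Affine.Point.some _ _ h₂ := by
  subst hx; subst hy; rfl

set_option maxHeartbeats 1000000 in
/-- On the elliptic curve `E₀ : y² + (1-c)xy - by = x³ - bx²` over `K = ℚ(α)` with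
`α³ - α² - 82α + 64 = 0`, `b = (10α² + 90α - 1936)/19773`, `c = (6α² + 50α - 208)/1521`,
the point `P = (0,0)` lies on `E₀` and `6·P ≠ O` and `4·P ≠ O` (so the order of `P` does not
divide `12`). -/
theorem stmt19 [Fact (Irreducible (X ^ 3 - X ^ 2 - 82 * X + 64 : ℚ[X]))] :
    let K := AdjoinRoot (X ^ 3 - X ^ 2 - 82 * X + 64 : ℚ[X])
    let α : K := AdjoinRoot.root _
    let b : K := (10 * α ^ 2 + 90 * α - 1936) / 19773
    let c : K := (6 * α ^ 2 + 50 * α - 208) / 1521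
    let W : WeierstrassCurve.Affine K := ⟨1 - c, -b, -b, 0, 0⟩
    W.Equation 0 0 ∧
    ∃ h : W.Nonsingular 0 0,
      6 • (WeierstrassCurve.Affine.Point.some _ _ h) ≠ 0 ∧
      4 • (WeierstrassCurve.Affine.Point.some _ _ h) ≠ 0 := by

  intro K α b c W
  haveI : CharZero K := charZero_of_injective_algebraMap (algebraMap ℚ K).injective
  have hα : α ^ 3 - α ^ 2 - 82 * α + 64 = 0 := by
    have h0 : (Polynomial.aeval α) (X ^ 3 - X ^ 2 - 82 * X + 64 : ℚ[X]) = 0 := by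
      exact (AdjoinRoot.aeval_eq (f := (X ^ 3 - X ^ 2 - 82 * X + 64 : ℚ[X])) (X ^ 3 - X ^ 2 - 82 * X + 64 : ℚ[X])).trans AdjoinRoot.mk_self
    simpa [map_ofNat] using h0
  have nzK : ∀ p : ℚ[X], p ≠ 0 → p.degree < 3 → (Polynomial.aeval α) p ≠ 0 := by
    intro p hp hdeg hzero
    replace hzero := (AdjoinRoot.aeval_eq (f := (X ^ 3 - X ^ 2 - 82 * X + 64 : ℚ[X])) p).symm.trans hzero
    rw [AdjoinRoot.mk_eq_zero] at hzero
    have hd := Polynomial.degree_le_of_dvd hzero hp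
    have h3 : (X ^ 3 - X ^ 2 - 82 * X + 64 : ℚ[X]).degree = 3 := by compute_degree!
    rw [h3] at hd
    exact absurd hdeg (not_lt.mpr hd)
  have hbne : (10 * α ^ 2 + 90 * α - 1936 : K) ≠ 0 := by
    have hdeg : (10 * X ^ 2 + 90 * X - 1936 : ℚ[X]).degree = 2 := by compute_degree!
    have hp0 : (10 * X ^ 2 + 90 * X - 1936 : ℚ[X]) ≠ 0 := fun hh => by
      have := congrArg (Polynomial.eval 0) hh; simp at this
    have := nzK _ hp0 (by rw [hdeg]; decide)
    simpa [map_ofNat] using this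
  have hcne : (6 * α ^ 2 + 50 * α - 208 : K) ≠ 0 := by
    have hdeg : (6 * X ^ 2 + 50 * X - 208 : ℚ[X]).degree = 2 := by compute_degree!
    have hp0 : (6 * X ^ 2 + 50 * X - 208 : ℚ[X]) ≠ 0 := fun hh => by
      have := congrArg (Polynomial.eval 0) hh; simp at this
    have := nzK _ hp0 (by rw [hdeg]; decide)
    simpa [map_ofNat] using this
  have hkne : (-11548 * α ^ 2 - 94568 * α + 87296 : K) ≠ 0 := by
    have hdeg : (-11548 * X ^ 2 - 94568 * X + 87296 : ℚ[X]).degree = 2 := by compute_degree!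
    have hp0 : (-11548 * X ^ 2 - 94568 * X + 87296 : ℚ[X]) ≠ 0 := fun hh => by
      have := congrArg (Polynomial.eval 0) hh; simp at this
    have := nzK _ hp0 (by rw [hdeg]; decide)
    intro hh; apply this; simp [map_ofNat]; linear_combination hh
  have h19 : (19773 : K) ≠ 0 := by norm_num
  have h15 : (1521 : K) ≠ 0 := by norm_num
  have hbn : (19773 : K) * b = 10 * α ^ 2 + 90 * α - 1936 := by
    show (19773 : K) * ((10 * α ^ 2 + 90 * α - 1936) / 19773) = _
    rw [mul_comm]; exact div_mul_cancel₀ _ h19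
  have hcn : (1521 : K) * c = 6 * α ^ 2 + 50 * α - 208 := by
    show (1521 : K) * ((6 * α ^ 2 + 50 * α - 208) / 1521) = _
    rw [mul_comm]; exact div_mul_cancel₀ _ h15
  have hb : b ≠ 0 := fun h => hbne (by rw [← hbn, h, mul_zero])
  have hc : c ≠ 0 := fun h => hcne (by rw [← hcn, h, mul_zero])
  have keyval : (2313441 : K) * (b - c - c ^ 2) = -11548 * α ^ 2 - 94568 * α + 87296 := by
    linear_combination (117 : K) * hbn - (1521 + 1521 * c + (6 * α ^ 2 + 50 * α - 208)) * hcn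
      - (36 * α + 636) * hα
  have hkey : b - c ≠ c ^ 2 := by
    intro h
    apply hkne
    rw [← keyval, h]
    ring
  have hA1 : W.a₁ = 1 - c := rfl
  have hA2 : W.a₂ = -b := rfl
  have hA3 : W.a₃ = -b := rfl
  have hA4 : W.a₄ = 0 := rfl
  have hA6 : W.a₆ = 0 := rfl
  have hEq : W.Equation 0 0 := by rw [equation_iff]; simp [hA6]
  have h : W.Nonsingular 0 0 := by
    rw [nonsingular_zero]
    exact ⟨hA6, Or.inl (by rw [hA3]; exact neg_ne_zero.mpr hb)⟩
  have hneg00 : W.negY 0 0 = b := by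
    simp [WeierstrassCurve.Affine.negY, hA1, hA3]
  have hy' : (0 : K) ≠ W.negY 0 0 := by rw [hneg00]; exact Ne.symm hb
  have hL1 : W.slope 0 0 0 0 = 0 := by
    rw [slope_of_Y_ne rfl hy']
    simp [hA1, hA4]
  have hx2 : W.addX 0 0 (W.slope 0 0 0 0) = b := by
    rw [hL1]; simp [WeierstrassCurve.Affine.addX, hA1, hA2]
  have hy2 : W.addY 0 0 0 (W.slope 0 0 0 0) = b * c := by
    rw [hL1]
    simp only [WeierstrassCurve.Affine.addY, WeierstrassCurve.Affine.negAddY,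
      WeierstrassCurve.Affine.addX, WeierstrassCurve.Affine.negY, hA1, hA2, hA3]
    ring
  have h2 : W.Nonsingular b (b * c) := by
    have := nonsingular_add h h fun hxy => hy' hxy.2
    rwa [hx2, hy2] at this
  have e2 : Point.some _ _ h + Point.some _ _ h = Point.some _ _ h2 :=
    (add_self_of_Y_ne hy').trans (some_eq_some' _ _ hx2 hy2)
  have hL2 : W.slope b 0 (b * c) 0 = c := by
    rw [slope_of_X_ne hb, sub_zero, sub_zero, mul_div_cancel_left₀ _ hb]
  have hx3 : W.addX b 0 (W.slope b 0 (b * c) 0) = c := by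
    rw [hL2]
    simp only [WeierstrassCurve.Affine.addX, hA1, hA2]
    ring
  have hy3 : W.addY b 0 (b * c) (W.slope b 0 (b * c) 0) = b - c := by
    rw [hL2]
    simp only [WeierstrassCurve.Affine.addY, WeierstrassCurve.Affine.negAddY,
      WeierstrassCurve.Affine.addX, WeierstrassCurve.Affine.negY, hA1, hA2, hA3]
    ring
  have h3 : W.Nonsingular c (b - c) := by
    have := nonsingular_add h2 h fun hf => hb hf.1
    rwa [hx3, hy3] at this
  have e3 : Point.some _ _ h2 + Point.some _ _ h = Point.some _ _ h3 :=
    (add_of_X_ne hb).trans (some_eq_some' _ _ hx3 hy3)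
  have eP3 : (3 : ℕ) • Point.some _ _ h = Point.some _ _ h3 := by
    have : (3 : ℕ) • Point.some _ _ h = (2 : ℕ) • Point.some _ _ h + Point.some _ _ h := succ_nsmul _ 2
    rw [this, two_nsmul, e2, e3]
  have hnegc : W.negY c (b - c) = c ^ 2 := by
    simp only [WeierstrassCurve.Affine.negY, hA1, hA3]
    ring
  have hy3ne : b - c ≠ W.negY c (b - c) := by rw [hnegc]; exact hkey
  refine ⟨hEq, h, ?_, ?_⟩
  · have e6 : (6 : ℕ) • Point.some _ _ h = (3 : ℕ) • Point.some _ _ h + (3 : ℕ) • Point.some _ _ h := by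
      rw [← add_nsmul]
    rw [e6, eP3, add_self_of_Y_ne hy3ne]
    exact some_ne_zero _
  · have e4 : (4 : ℕ) • Point.some _ _ h = (3 : ℕ) • Point.some _ _ h + Point.some _ _ h := succ_nsmul _ 3
    rw [e4, eP3, add_of_X_ne hc]
    exact some_ne_zero _
end
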